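/- The top-k entropy loss, defined as the conjugate of the restricted softmax conjugate, reduces to the softmax loss when k = 1: with a_j = u_j for j ≠ y and s = ⟨1,x⟩, one has max{ ⟨a,x⟩ - (1-s)log(1-s) - ⟨x, log x⟩ : x ∈ Δ^α_1, ⟨1,x⟩ = s } = log(1 + sum_{j≠y} e^{a_j}), where Δ^α_1 = {x : ⟨1,x⟩ ≤ 1, 0 ≤ x_i ≤ ⟨1,x⟩} is the simplex. -/

import Mathlib

/-- Gibbs-type pointwise inequality: for `p ≥ 0`, `c > 0`,
`p log c - p log p ≤ c - p`. -/
lemma key_gibbs (p c : ℝ) (hp : 0 ≤ p) (hc : 0 < c) :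
    p * Real.log c - p * Real.log p ≤ c - p := by
  rcases eq_or_lt_of_le hp with h | h
  · simp [← h]; exact hc.le
  · have hlog : Real.log c - Real.log p = Real.log (c / p) :=
      (Real.log_div hc.ne' h.ne').symm
    have h2 : Real.log (c / p) ≤ c / p - 1 :=
      Real.log_le_sub_one_of_pos (div_pos hc h)
    have : p * Real.log c - p * Real.log p = p * Real.log (c / p) := by
      rw [← hlog]; ring
    rw [this]
    calc p * Real.log (c / p) ≤ p * (c / p - 1) := by nlinarith
      _ = c - p := by field_simp

/-- For `k = 1`, the top-`k` entropy loss reduces to the softmax loss: with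
`s = ⟨1,x⟩`, the maximum of `⟨a,x⟩ - (1-s) log (1-s) - ⟨x, log x⟩` over the
unit simplex `Δ^α₁ = {x : 0 ≤ x, x i ≤ ⟨1,x⟩, ⟨1,x⟩ ≤ 1}` equals
`log (1 + ∑ j exp (a j))`, and the maximum is attained. -/
theorem stmt13 (n : ℕ) (a : Fin n → ℝ) :
    IsGreatest {r : ℝ | ∃ x : Fin n → ℝ,
        (∀ i, 0 ≤ x i) ∧ (∀ i, x i ≤ ∑ j, x j) ∧ (∑ i, x i ≤ 1) ∧
        r = ∑ i, a i * x i - (1 - ∑ i, x i) * Real.log (1 - ∑ i, x i)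
              - ∑ i, x i * Real.log (x i)}
      (Real.log (1 + ∑ i, Real.exp (a i))) := by
  set S : ℝ := ∑ i, Real.exp (a i) with hS
  have hSnn : 0 ≤ S := Finset.sum_nonneg fun i _ => (Real.exp_pos _).le
  set Z : ℝ := 1 + S with hZ
  have hZpos : 0 < Z := by positivity
  constructor
  · -- membership: take the softmax point
    refine ⟨fun i => Real.exp (a i) / Z, fun i => by positivity, ?_, ?_, ?_⟩
    · intro i
      exact Finset.single_le_sum (f := fun j => Real.exp (a j) / Z)
        (fun j _ => by positivity) (Finset.mem_univ i)
    · have : ∑ i, Real.exp (a i) / Z = S / Z := by rw [← Finset.sum_div]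
      rw [this]
      rw [div_le_one hZpos]; linarith
    · have hsum : ∑ i, Real.exp (a i) / Z = S / Z := by rw [← Finset.sum_div]
      have hlog : ∀ i, Real.log (Real.exp (a i) / Z) = a i - Real.log Z := by
        intro i
        rw [Real.log_div (Real.exp_ne_zero _) hZpos.ne', Real.log_exp]
      have hent : ∑ i, (Real.exp (a i) / Z) * Real.log (Real.exp (a i) / Z)
          = ∑ i, a i * (Real.exp (a i) / Z) - (S / Z) * Real.log Z := by
        rw [Finset.sum_congr rfl fun i _ => by rw [hlog i]]
        rw [show (S / Z) * Real.log Z = ∑ i, (Real.exp (a i) / Z) * Real.log Z by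
          rw [← Finset.sum_mul, ← Finset.sum_div]]
        rw [← Finset.sum_sub_distrib]
        exact Finset.sum_congr rfl fun i _ => by ring
      rw [hsum, hent]
      have h1 : (1 : ℝ) - S / Z = 1 / Z := by field_simp; ring
      rw [h1, one_div, Real.log_inv]
      have : S / Z = 1 - 1 / Z := by rw [hZ]; field_simp; ring
      rw [this]
      ring
  · -- upper bound
    rintro r ⟨x, hx0, -, hs1, rfl⟩
    set s : ℝ := ∑ i, x i with hs
    have hsnn : 0 ≤ s := Finset.sum_nonneg fun i _ => hx0 i
    have A : ∑ i, (x i * (a i - Real.log Z) - x i * Real.log (x i))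
        ≤ ∑ i, (Real.exp (a i) / Z - x i) := by
      refine Finset.sum_le_sum fun i _ => ?_
      have := key_gibbs (x i) (Real.exp (a i) / Z) (hx0 i) (by positivity)
      have hl : Real.log (Real.exp (a i) / Z) = a i - Real.log Z := by
        rw [Real.log_div (Real.exp_ne_zero _) hZpos.ne', Real.log_exp]
      rw [hl] at this
      linarith
    have hA1 : ∑ i, (x i * (a i - Real.log Z) - x i * Real.log (x i))
        = ∑ i, a i * x i - s * Real.log Z - ∑ i, x i * Real.log (x i) := by
      rw [Finset.sum_sub_distrib]
      congr 1
      rw [show s * Real.log Z = ∑ i, x i * Real.log Z from Finset.sum_mul ..]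
      rw [← Finset.sum_sub_distrib]
      exact Finset.sum_congr rfl fun i _ => by ring
    have hA2 : ∑ i, (Real.exp (a i) / Z - x i) = S / Z - s := by
      rw [Finset.sum_sub_distrib, ← Finset.sum_div]
    rw [hA1, hA2] at A
    have B : (1 - s) * Real.log (1 / Z) - (1 - s) * Real.log (1 - s)
        ≤ 1 / Z - (1 - s) :=
      key_gibbs (1 - s) (1 / Z) (by linarith) (by positivity)
    rw [one_div, Real.log_inv] at B
    have hZeq : S * Z⁻¹ + Z⁻¹ = 1 := by
      field_simp
      rw [hZ]; ring
    clear_value S Z s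
    have hAB := add_le_add A B
    ring_nf at hAB ⊢
    linarith [hAB, hZeq]
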